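/- Let np be the map from games over L5 to normal-play combinatorial games (pregames) that replaces every atom by the normal-play game 0 = { | } while keeping the tree of left and right options. For all games G and H over L5 that have mean 0, G ≤ H holds (in the sense of games over L5) if and only if np(G) ≤ np(H) holds in normal-play combinatorial game theory. -/

import Mathlib

universe u

/-- Conway pregames (formerly Mathlib's `SetTheory.PGame`, removed from Mathlib). -/
inductive SetTheory.PGame : Type (u + 1)
  | mk : ∀ α β : Type u, (α → SetTheory.PGame) → (β → SetTheory.PGame) → SetTheory.PGame

namespace SetTheory.PGame

/-- The zero pregame `{ | }`. -/
instance : Zero SetTheory.PGame.{u} := ⟨SetTheory.PGame.mk PEmpty PEmpty PEmpty.elim PEmpty.elim⟩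

/-- Simultaneous definition of `≤` and `⧏` on pregames (as in Mathlib's former `PGame.le_lf`):
`x ≤ y` iff `∀ i, xL i ⧏ y` and `∀ j, x ⧏ yR j`; `x ⧏ y` iff `∃ i, x ≤ yL i` or `∃ j, xR j ≤ y`. -/
noncomputable def leLf : SetTheory.PGame.{u} → SetTheory.PGame.{u} → Prop × Prop
  | mk _ _ xL xR, y =>
    SetTheory.PGame.rec (motive := fun _ => Prop × Prop)
      (fun _ _ yL yR ihL ihR =>
        ((∀ i, (leLf (xL i) (mk _ _ yL yR)).2) ∧ ∀ j, (ihR j).2,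
          (∃ i, (ihL i).1) ∨ ∃ j, (leLf (xR j) (mk _ _ yL yR)).1)) y

/-- The order `≤` on pregames. -/
instance : LE SetTheory.PGame.{u} := ⟨fun x y => (leLf x y).1⟩

end SetTheory.PGame

/-- Combinatorial games over a poset `A` of atoms: either an atomic game `[a]` for an atom
`a : A`, or a composite game `⟨L|R⟩` where `L` and `R` are nonempty families of games
(the left and right options). -/
inductive PoGame (A : Type u) : Type (u + 1) where
  | atom : A → PoGame A
  | mk : (xl xr : Type u) → (xl → PoGame A) → (xr → PoGame A) →
      Nonempty xl → Nonempty xr → PoGame A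

namespace PoGame

variable {A : Type u}

/-- `G` is an atomic game. -/
def IsAtomic : PoGame A → Prop
  | atom _ => True
  | mk _ _ _ _ _ _ => False

/-- `G` is a left option of the game given as second argument. -/
def IsLeftOption (G : PoGame A) : PoGame A → Prop
  | atom _ => False
  | mk _ _ L _ _ _ => ∃ i, L i = G

/-- `G` is a right option of the game given as second argument. -/
def IsRightOption (G : PoGame A) : PoGame A → Prop
  | atom _ => False
  | mk _ _ _ R _ _ => ∃ j, R j = G

section Order

variable [PartialOrder A]

mutual
  /-- `Le G H` is the relation `G ≤ H` on games over the poset `A`, defined by mutual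
  recursion with `Lf` (the relation `G ⊲ H`): `G ≤ H` iff every left option `G^L`
  satisfies `G^L ⊲ H`, every right option `H^R` satisfies `G ⊲ H^R`, and if `G` or `H`
  is atomic then `G ⊲ H`. -/
  inductive Le : PoGame A → PoGame A → Prop
    | intro (G H : PoGame A)
        (hL : ∀ G', IsLeftOption G' G → Lf G' H)
        (hR : ∀ H', IsRightOption H' H → Lf G H')
        (hA : IsAtomic G ∨ IsAtomic H → Lf G H) : Le G H

  /-- `Lf G H` is the relation `G ⊲ H` on games over the poset `A`: it holds iff some
  right option `G^R` satisfies `G^R ≤ H`, or some left option `H^L` satisfies `G ≤ H^L`,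
  or `G = [a]` and `H = [b]` are atomic with `a ≤ b` in `A`. -/
  inductive Lf : PoGame A → PoGame A → Prop
    | rightOption (G H G' : PoGame A) (h : IsRightOption G' G) (hle : Le G' H) : Lf G H
    | leftOption (G H H' : PoGame A) (h : IsLeftOption H' H) (hle : Le G H') : Lf G H
    | atom (a b : A) (hab : a ≤ b) : Lf (atom a) (atom b)
end

/-- Two games are equivalent if `G ≤ H` and `H ≤ G`. -/
def GEquiv (G H : PoGame A) : Prop := Le G H ∧ Le H G

/-- `G` is locally monotone if `G ≤ G^L` for every left option `G^L` and `G^R ≤ G` for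
every right option `G^R`. -/
def LocallyMonotone (G : PoGame A) : Prop :=
  (∀ G', IsLeftOption G' G → Le G G') ∧ (∀ G', IsRightOption G' G → Le G' G)

/-- `G` is an option (left or right) of `H`. -/
def IsOption (G H : PoGame A) : Prop := IsLeftOption G H ∨ IsRightOption G H

/-- `G` is a position of `H`: `H` itself, an option of `H`, an option of an option, etc. -/
def IsPosition (G H : PoGame A) : Prop := Relation.ReflTransGen IsOption G H

/-- `G` is monotone if every position of `G` is locally monotone. -/
def Monotone (G : PoGame A) : Prop := ∀ K, IsPosition K G → LocallyMonotone K

end Order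

/-- The 5-element linearly ordered set `L5 = {-3, -2, -1, 0, 1}`. -/
abbrev L5 : Type := {a : ℤ // -3 ≤ a ∧ a ≤ 1}

/-- `G` has mean `C`: an atomic game `[a]` has mean `a`, and a composite game has mean `C`
iff every left option has mean `C + 1` and every right option has mean `C - 1`. -/
def HasMean : PoGame L5 → ℤ → Prop
  | atom a, C => (a : ℤ) = C
  | mk _ _ L R _ _, C => (∀ i, HasMean (L i) (C + 1)) ∧ (∀ j, HasMean (R j) (C - 1))

/-- The game `⟨G | H⟩` with a single left option `G` and a single right option `H`. -/
def ofPair (G H : PoGame A) : PoGame A :=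
  mk PUnit PUnit (fun _ => G) (fun _ => H) ⟨PUnit.unit⟩ ⟨PUnit.unit⟩

/-- `⋆ = ⟨-1 | -3⟩`. -/
def star : PoGame L5 := ofPair (atom ⟨-1, by norm_num⟩) (atom ⟨-3, by norm_num⟩)

/-- `M(G) = ⟨1 | G⟩`. -/
def M (G : PoGame L5) : PoGame L5 := ofPair (atom ⟨1, by norm_num⟩) G

/-- `P(G) = ⟨G | -2⟩`. -/
def P (G : PoGame L5) : PoGame L5 := ofPair G (atom ⟨-2, by norm_num⟩)

/-- `P⋆(G) = ⟨G | ⋆⟩`. -/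
def Pstar (G : PoGame L5) : PoGame L5 := ofPair G star

/-- `Pn n G = P G` if `n` is odd, `P⋆ G` if `n` is even. -/
def Pn (n : ℕ) (G : PoGame L5) : PoGame L5 := if Odd n then P G else Pstar G

/-- The sequence `G_0 = [0]`, `G_{n+1} = M (Pn n (G_n))`. -/
def Gseq : ℕ → PoGame L5
  | 0 => atom ⟨0, by norm_num⟩
  | n + 1 => M (Pn n (Gseq n))

/-- The normal-play game obtained from a game over `L5` by replacing every atom by the
normal-play game `0 = { | }`, keeping the tree of left and right options. -/
def np : PoGame L5 → SetTheory.PGame.{0}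
  | atom _ => 0
  | mk xl xr L R _ _ => SetTheory.PGame.mk xl xr (fun i => np (L i)) (fun j => np (R j))

end PoGame

namespace SetTheory.PGame

/-- Left moves of a pregame. -/
def LeftMoves : SetTheory.PGame.{u} → Type u
  | mk l _ _ _ => l

/-- Right moves of a pregame. -/
def RightMoves : SetTheory.PGame.{u} → Type u
  | mk _ r _ _ => r

/-- The left option. -/
def moveLeft : (x : SetTheory.PGame.{u}) → LeftMoves x → SetTheory.PGame.{u}
  | mk _ _ L _ => L

/-- The right option. -/
def moveRight : (x : SetTheory.PGame.{u}) → RightMoves x → SetTheory.PGame.{u}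
  | mk _ _ _ R => R

/-- The less-or-fuzzy relation. -/
def PLf (x y : SetTheory.PGame.{u}) : Prop := (leLf x y).2

infix:50 " ⧏ " => SetTheory.PGame.PLf

theorem le_iff_forall_lf {x y : SetTheory.PGame.{u}} :
    x ≤ y ↔ (∀ i, x.moveLeft i ⧏ y) ∧ ∀ j, x ⧏ y.moveRight j := by
  cases x; cases y; rfl

theorem lf_iff_exists_le {x y : SetTheory.PGame.{u}} :
    x ⧏ y ↔ (∃ i, x ≤ y.moveLeft i) ∨ ∃ j, x.moveRight j ≤ y := by
  cases x; cases y; rfl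

theorem lf_irrefl (x : SetTheory.PGame.{u}) : ¬ x ⧏ x := by
  induction x with
  | mk xl xr xL xR ihL ihR =>
    rw [lf_iff_exists_le]
    rintro (⟨i, hi⟩ | ⟨j, hj⟩)
    · exact ihL i ((le_iff_forall_lf.mp hi).1 i)
    · exact ihR j ((le_iff_forall_lf.mp hj).2 j)

theorem zero_le_zero' : (0 : SetTheory.PGame.{u}) ≤ 0 :=
  le_iff_forall_lf.mpr ⟨fun i => PEmpty.elim i, fun j => PEmpty.elim j⟩

end SetTheory.PGame

open PoGame SetTheory PGame in
private lemma PoGame.ord12 (G : PoGame L5) : ∀ (H : PoGame L5) (CG CH : ℤ),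
    HasMean G CG → HasMean H CH → ((CG < CH → Le G H) ∧ (CG ≤ CH → Lf G H)) := by
  induction G with
  | atom a =>
    intro H
    induction H with
    | atom b =>
      intro CG CH hG hH
      have ha : (a : ℤ) = CG := hG
      have hb : (b : ℤ) = CH := hH
      have key : CG ≤ CH → Lf (atom a) (atom b) := fun h =>
        Lf.atom a b (Subtype.coe_le_coe.mp (by omega))
      exact ⟨fun hlt => Le.intro _ _ (fun G' h => False.elim h) (fun H' h => False.elim h)
        (fun _ => key hlt.le), key⟩
    | mk yl yr YL YR hy1 hy2 ihYL ihYR =>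
      intro CG CH hG hH
      obtain ⟨i0⟩ := id hy1
      have key : CG ≤ CH → Lf (atom a) (mk yl yr YL YR hy1 hy2) := fun h =>
        Lf.leftOption _ _ (YL i0) ⟨i0, rfl⟩
          ((ihYL i0 CG (CH + 1) hG (hH.1 i0)).1 (by omega))
      refine ⟨fun hlt => ?_, key⟩
      refine Le.intro _ _ (fun G' h => False.elim h) (fun H' h => ?_) (fun _ => key hlt.le)
      obtain ⟨j, rfl⟩ := h
      exact (ihYR j CG (CH - 1) hG (hH.2 j)).2 (by omega)
  | mk xl xr XL XR hx1 hx2 ihXL ihXR =>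
    intro H
    induction H with
    | atom b =>
      intro CG CH hG hH
      obtain ⟨j0⟩ := id hx2
      have key : CG ≤ CH → Lf (mk xl xr XL XR hx1 hx2) (atom b) := fun h =>
        Lf.rightOption _ _ (XR j0) ⟨j0, rfl⟩
          ((ihXR j0 (atom b) (CG - 1) CH (hG.2 j0) hH).1 (by omega))
      refine ⟨fun hlt => ?_, key⟩
      refine Le.intro _ _ (fun G' h => ?_) (fun H' h => False.elim h) (fun _ => key hlt.le)
      obtain ⟨i, rfl⟩ := h
      exact (ihXL i (atom b) (CG + 1) CH (hG.1 i) hH).2 (by omega)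
    | mk yl yr YL YR hy1 hy2 ihYL ihYR =>
      intro CG CH hG hH
      obtain ⟨j0⟩ := id hx2
      have key : CG ≤ CH → Lf (mk xl xr XL XR hx1 hx2) (mk yl yr YL YR hy1 hy2) := fun h =>
        Lf.rightOption _ _ (XR j0) ⟨j0, rfl⟩
          ((ihXR j0 _ (CG - 1) CH (hG.2 j0) hH).1 (by omega))
      refine ⟨fun hlt => ?_, key⟩
      refine Le.intro _ _ (fun G' h => ?_) (fun H' h => ?_) (fun h => key hlt.le)
      · obtain ⟨i, rfl⟩ := h
        exact (ihXL i _ (CG + 1) CH (hG.1 i) hH).2 (by omega)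
      · obtain ⟨j, rfl⟩ := h
        exact (ihYR j CG (CH - 1) hG (hH.2 j)).2 (by omega)

open PoGame SetTheory PGame in
private lemma PoGame.ord34 (G : PoGame L5) : ∀ (H : PoGame L5) (CG CH : ℤ),
    HasMean G CG → HasMean H CH →
    ((CG = CH → (Le G H ↔ np G ≤ np H)) ∧ (CG = CH + 1 → (Lf G H ↔ np G ⧏ np H))) := by
  induction G with
  | atom a =>
    intro H
    induction H with
    | atom b =>
      intro CG CH hG hH
      have ha : (a : ℤ) = CG := hG
      have hb : (b : ℤ) = CH := hH
      constructor
      · intro hC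
        constructor
        · intro _; exact PGame.zero_le_zero'
        · intro _
          exact Le.intro _ _ (fun G' h => False.elim h) (fun H' h => False.elim h)
            (fun _ => Lf.atom a b (Subtype.coe_le_coe.mp (by omega)))
      · intro hC
        constructor
        · intro h
          cases h with
          | rightOption _ _ G' h _ => exact False.elim h
          | leftOption _ _ H' h _ => exact False.elim h
          | atom _ _ hab =>
            have := Subtype.coe_le_coe.mpr hab
            omega
        · intro h; exact absurd h (PGame.lf_irrefl 0)
    | mk yl yr YL YR hy1 hy2 ihYL ihYR =>
      intro CG CH hG hH
      constructor
      · intro hC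
        rw [PGame.le_iff_forall_lf]
        constructor
        · rintro hle
          cases hle with
          | intro _ _ hL hR hA =>
            refine ⟨fun i => PEmpty.elim i, fun j => ?_⟩
            exact ((ihYR j CG (CH - 1) hG (hH.2 j)).2 (by omega)).mp (hR (YR j) ⟨j, rfl⟩)
        · rintro ⟨h1, h2⟩
          refine Le.intro _ _ (fun G' h => False.elim h) (fun H' h => ?_) (fun _ => ?_)
          · obtain ⟨j, rfl⟩ := h
            exact ((ihYR j CG (CH - 1) hG (hH.2 j)).2 (by omega)).mpr (h2 j)
          · exact (PoGame.ord12 (atom a) _ CG CH hG hH).2 (by omega)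
      · intro hC
        rw [PGame.lf_iff_exists_le]
        constructor
        · intro h
          cases h with
          | rightOption _ _ G' h _ => exact False.elim h
          | leftOption _ _ H' h hle =>
            obtain ⟨i, rfl⟩ := h
            exact Or.inl ⟨i, ((ihYL i CG (CH + 1) hG (hH.1 i)).1 (by omega)).mp hle⟩
        · rintro (⟨i, hi⟩ | ⟨j, hj⟩)
          · exact Lf.leftOption _ _ (YL i) ⟨i, rfl⟩
              (((ihYL i CG (CH + 1) hG (hH.1 i)).1 (by omega)).mpr hi)
          · exact PEmpty.elim j
  | mk xl xr XL XR hx1 hx2 ihXL ihXR =>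
    intro H
    induction H with
    | atom b =>
      intro CG CH hG hH
      constructor
      · intro hC
        rw [PGame.le_iff_forall_lf]
        constructor
        · rintro hle
          cases hle with
          | intro _ _ hL hR hA =>
            refine ⟨fun i => ?_, fun j => PEmpty.elim j⟩
            exact ((ihXL i (atom b) (CG + 1) CH (hG.1 i) hH).2 (by omega)).mp
              (hL (XL i) ⟨i, rfl⟩)
        · rintro ⟨h1, h2⟩
          refine Le.intro _ _ (fun G' h => ?_) (fun H' h => False.elim h) (fun _ => ?_)
          · obtain ⟨i, rfl⟩ := h
            exact ((ihXL i (atom b) (CG + 1) CH (hG.1 i) hH).2 (by omega)).mpr (h1 i)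
          · exact (PoGame.ord12 _ (atom b) CG CH hG hH).2 (by omega)
      · intro hC
        rw [PGame.lf_iff_exists_le]
        constructor
        · intro h
          cases h with
          | rightOption _ _ G' h hle =>
            obtain ⟨j, rfl⟩ := h
            exact Or.inr ⟨j, ((ihXR j (atom b) (CG - 1) CH (hG.2 j) hH).1 (by omega)).mp hle⟩
          | leftOption _ _ H' h _ => exact False.elim h
        · rintro (⟨i, hi⟩ | ⟨j, hj⟩)
          · exact PEmpty.elim i
          · exact Lf.rightOption _ _ (XR j) ⟨j, rfl⟩
              (((ihXR j (atom b) (CG - 1) CH (hG.2 j) hH).1 (by omega)).mpr hj)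
    | mk yl yr YL YR hy1 hy2 ihYL ihYR =>
      intro CG CH hG hH
      constructor
      · intro hC
        rw [PGame.le_iff_forall_lf]
        constructor
        · rintro hle
          cases hle with
          | intro _ _ hL hR hA =>
            constructor
            · intro i
              exact ((ihXL i _ (CG + 1) CH (hG.1 i) hH).2 (by omega)).mp (hL (XL i) ⟨i, rfl⟩)
            · intro j
              exact ((ihYR j CG (CH - 1) hG (hH.2 j)).2 (by omega)).mp (hR (YR j) ⟨j, rfl⟩)
        · rintro ⟨h1, h2⟩
          refine Le.intro _ _ (fun G' h => ?_) (fun H' h => ?_)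
            (fun h => by rcases h with h | h <;> exact False.elim h)
          · obtain ⟨i, rfl⟩ := h
            exact ((ihXL i _ (CG + 1) CH (hG.1 i) hH).2 (by omega)).mpr (h1 i)
          · obtain ⟨j, rfl⟩ := h
            exact ((ihYR j CG (CH - 1) hG (hH.2 j)).2 (by omega)).mpr (h2 j)
      · intro hC
        rw [PGame.lf_iff_exists_le]
        constructor
        · intro h
          cases h with
          | rightOption _ _ G' h hle =>
            obtain ⟨j, rfl⟩ := h
            exact Or.inr ⟨j, ((ihXR j _ (CG - 1) CH (hG.2 j) hH).1 (by omega)).mp hle⟩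
          | leftOption _ _ H' h hle =>
            obtain ⟨i, rfl⟩ := h
            exact Or.inl ⟨i, ((ihYL i CG (CH + 1) hG (hH.1 i)).1 (by omega)).mp hle⟩
        · rintro (⟨i, hi⟩ | ⟨j, hj⟩)
          · exact Lf.leftOption _ _ (YL i) ⟨i, rfl⟩
              (((ihYL i CG (CH + 1) hG (hH.1 i)).1 (by omega)).mpr hi)
          · exact Lf.rightOption _ _ (XR j) ⟨j, rfl⟩
              (((ihXR j _ (CG - 1) CH (hG.2 j) hH).1 (by omega)).mpr hj)

open PoGame in
/-- For games `G`, `H` over `L5` of mean `0`, `G ≤ H` holds iff `np G ≤ np H` holds for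
the associated normal-play games. -/
theorem stmt_18 (G H : PoGame L5) (hG : HasMean G 0) (hH : HasMean H 0) :
    Le G H ↔ np G ≤ np H := by
  exact (PoGame.ord34 G H 0 0 hG hH).1 rfl
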